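/- arXiv:1207.5930 — 3 statements merged into one kernel-verified Lean document; each statement's English description precedes it below -/
import Mathlib

section
/- Let c ∈ ℂ, r > 0, and let f : ℂ → ℂ be an entire function that maps the closed disk {z : |z − c| ≤ r} into the open disk {z : |z − c| < r/2}. Then f has a unique fixed point ζ in {z : |z − c| < r/2}, and for every z with |z − c| ≤ r the iterates fⁿ(z) converge to ζ as n → ∞. -/
/-- An entire function mapping the closed disk `{|z − c| ≤ r}` into the open disk
`{|z − c| < r/2}` has a unique fixed point `ζ` there, and all iterates starting in the
closed disk converge to `ζ`. -/
theorem stmt2 (c : ℂ) (r : ℝ) (hr : 0 < r) (f : ℂ → ℂ) (hf : Differentiable ℂ f)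
    (hmap : ∀ z : ℂ, ‖z - c‖ ≤ r → ‖f z - c‖ < r / 2) :
    ∃ ζ : ℂ, ‖ζ - c‖ < r / 2 ∧ f ζ = ζ ∧
      (∀ ζ' : ℂ, ‖ζ' - c‖ < r / 2 → f ζ' = ζ' → ζ' = ζ) ∧
      ∀ z : ℂ, ‖z - c‖ ≤ r →
        Filter.Tendsto (fun n : ℕ => f^[n] z) Filter.atTop (nhds ζ) := by
  -- the sup of |f z - c| on the closed ball is attained and < r/2
  obtain ⟨x₀, hx₀, hmax⟩ :=
    (isCompact_closedBall c r).exists_isMaxOn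
      (Metric.nonempty_closedBall.2 hr.le)
      ((continuous_norm.comp (hf.continuous.sub continuous_const)).continuousOn)
  set M : ℝ := ‖f x₀ - c‖ with hM
  have hMlt : M < r / 2 := hmap x₀ (by simpa [Complex.dist_eq] using hx₀)
  have hM0 : 0 ≤ M := norm_nonneg _
  have hMle : ∀ z : ℂ, ‖z - c‖ ≤ r → ‖f z - c‖ ≤ M := by
    intro z hz
    exact hmax (by simpa [Complex.dist_eq] using hz)
  set k : ℝ := M / (r / 2) with hk
  have hk0 : 0 ≤ k := div_nonneg hM0 (by linarith)
  have hk1 : k < 1 := (div_lt_one (by linarith)).2 hMlt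
  set s : Set ℂ := Metric.closedBall c (r / 2) with hs
  have hsub : ∀ z ∈ s, ‖z - c‖ ≤ r := by
    intro z hz
    have := Metric.mem_closedBall.1 hz
    rw [Complex.dist_eq] at this
    linarith
  have hsf : Set.MapsTo f s s := by
    intro z hz
    simpa [Complex.dist_eq, s] using (hmap z (hsub z hz)).le
  -- Cauchy estimate: |f'(w)| ≤ k for w ∈ s
  have hderiv : ∀ w ∈ s, ‖deriv f w‖ ≤ k := by
    intro w hw
    have hw' : ‖w - c‖ ≤ r / 2 := by
      simpa [Complex.dist_eq, s] using hw
    have hd : DiffContOnCl ℂ (fun z => f z - c) (Metric.ball w (r / 2)) :=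
      ((hf.sub_const c).differentiableOn).diffContOnCl
    have hC : ∀ z ∈ Metric.sphere w (r / 2), ‖f z - c‖ ≤ M := by
      intro z hz
      have hz' : ‖z - w‖ = r / 2 := by
        simpa [Complex.dist_eq] using Metric.mem_sphere.1 hz
      refine hMle z ?_
      calc ‖z - c‖ ≤ ‖z - w‖ + ‖w - c‖ := by
            simpa using norm_add_le (z - w) (w - c)
        _ ≤ r / 2 + r / 2 := by rw [hz']; linarith
        _ = r := by ring
    have := Complex.norm_deriv_le_of_forall_mem_sphere_norm_le (by linarith : (0:ℝ) < r / 2)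
      hd hC
    have hde : deriv (fun z => f z - c) w = deriv f w := by
      simp [deriv_sub_const]
    rw [hde] at this
    exact this
  -- f is k-Lipschitz on s
  have hlip : ∀ x ∈ s, ∀ y ∈ s, dist (f x) (f y) ≤ k * dist x y := by
    intro x hx y hy
    have := (convex_closedBall c (r / 2)).norm_image_sub_le_of_norm_deriv_le
      (fun z _ => hf z) hderiv hy hx
    simpa [dist_eq_norm] using this
  set K : NNReal := Real.toNNReal k with hK
  have hKk : (K : ℝ) = k := Real.coe_toNNReal k hk0
  have hlipOn : LipschitzOnWith K f s :=
    LipschitzOnWith.of_dist_le_mul (by intro x hx y hy; rw [hKk]; exact hlip x hx y hy)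
  have hcontr : ContractingWith K (hsf.restrict f s s) :=
    ⟨by rw [← NNReal.coe_lt_coe, hKk]; exact hk1, hlipOn.mapsToRestrict hsf⟩
  have hcs : c ∈ s := Metric.mem_closedBall_self (by linarith)
  obtain ⟨ζ, hζs, hζfix, -, -⟩ :=
    hcontr.exists_fixedPoint' (Metric.isClosed_closedBall.isComplete) hsf hcs (edist_ne_top _ _)
  have hζfix' : f ζ = ζ := hζfix
  have hζlt : ‖ζ - c‖ < r / 2 := by
    have := hmap ζ (hsub ζ hζs)
    rwa [hζfix'] at this
  -- iterates of points of s stay in s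
  have hiter : ∀ (x : ℂ), x ∈ s → ∀ n : ℕ, f^[n] x ∈ s := by
    intro x hx n
    induction n with
    | zero => simpa using hx
    | succ n ih => rw [Function.iterate_succ_apply']; exact hsf ih
  -- geometric convergence of iterates from s
  have hconv : ∀ x ∈ s, Filter.Tendsto (fun n : ℕ => f^[n] x) Filter.atTop (nhds ζ) := by
    intro x hx
    have hbound : ∀ n : ℕ, dist (f^[n] x) ζ ≤ k ^ n * dist x ζ := by
      intro n
      induction n with
      | zero => simp
      | succ n ih =>
        rw [Function.iterate_succ_apply', pow_succ]
        calc dist (f (f^[n] x)) ζ = dist (f (f^[n] x)) (f ζ) := by rw [hζfix']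
          _ ≤ k * dist (f^[n] x) ζ := hlip _ (hiter x hx n) _ hζs
          _ ≤ k * (k ^ n * dist x ζ) := by
              exact mul_le_mul_of_nonneg_left ih hk0
          _ = k ^ n * k * dist x ζ := by ring
    rw [tendsto_iff_dist_tendsto_zero]
    have h0 : Filter.Tendsto (fun n : ℕ => k ^ n * dist x ζ) Filter.atTop (nhds 0) := by
      have := tendsto_pow_atTop_nhds_zero_of_lt_one hk0 hk1
      simpa using this.mul_const (dist x ζ)
    exact squeeze_zero (fun n => dist_nonneg) hbound h0
  refine ⟨ζ, hζlt, hζfix', ?_, ?_⟩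
  · intro ζ' hζ' hfix'
    have hζ's : ζ' ∈ s := by simpa [Complex.dist_eq, s] using hζ'.le
    have := hlip ζ' hζ's ζ hζs
    rw [hfix', hζfix'] at this
    have hd0 : dist ζ' ζ ≤ 0 := by nlinarith [dist_nonneg (x := ζ') (y := ζ)]
    exact eq_of_dist_eq_zero (le_antisymm hd0 dist_nonneg)
  · intro z hz
    have hfz : f z ∈ s := by simpa [Complex.dist_eq, s] using (hmap z hz).le
    have := hconv (f z) hfz
    have hshift : Filter.Tendsto (fun n : ℕ => f^[n + 1] z) Filter.atTop (nhds ζ) := by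
      simpa [Function.iterate_succ_apply] using this
    exact (Filter.tendsto_add_atTop_iff_nat 1).1 hshift
end

section
/- Let f and g be entire functions such that for all integers q ≥ 1: |f(z) + (4·n(0,q)+2)| < 1/2 for z ∈ G_{0,q}; |g(z) + (4·n(2,q)+2)| < 1/2 for z ∈ B_{0,q}; and for all p ≥ 1, q ≥ 1: |f(z) + (4·n(p,q+1)+2)| < 1/2 for z ∈ B_{p,q}; and for all p ≥ 2, q ≥ 1: |g(z) + (4·n(p,q+1)+2)| < 1/2 for z ∈ B_{p,q}. Then for every q ≥ 1 and every m ≥ 1, (g∘f)ᵐ(G_{0,q}) ⊂ B_{2, q+2(m−1)}. -/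
open Complex Filter Set

/-- `G₀ = {z : |z − 2| ≤ 1}`. -/
def G0 : Set ℂ := {z : ℂ | ‖z - 2‖ ≤ 1}

/-- `G_k = {z : |z − (4k+2)| ≤ 1} ∪ {z : Re z = 4k+2, Im z ≥ 1} ∪ {z : Re z = 4k+2, Im z ≤ −1}`. -/
def G (k : ℕ) : Set ℂ :=
  {z : ℂ | ‖z - (4 * (k : ℂ) + 2)‖ ≤ 1} ∪
  {z : ℂ | z.re = 4 * (k : ℝ) + 2 ∧ 1 ≤ z.im} ∪
  {z : ℂ | z.re = 4 * (k : ℝ) + 2 ∧ z.im ≤ -1}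

/-- `B_k = {z : |z + (4k+2)| ≤ 1} ∪ {z : Re z = −(4k+2), Im z ≥ 1} ∪ {z : Re z = −(4k+2), Im z ≤ −1}`. -/
def B (k : ℕ) : Set ℂ :=
  {z : ℂ | ‖z + (4 * (k : ℂ) + 2)‖ ≤ 1} ∪
  {z : ℂ | z.re = -(4 * (k : ℝ) + 2) ∧ 1 ≤ z.im} ∪
  {z : ℂ | z.re = -(4 * (k : ℝ) + 2) ∧ z.im ≤ -1}

/-- `L_k = {z : Re z = 4k}`. -/
def L (k : ℕ) : Set ℂ := {z : ℂ | z.re = 4 * (k : ℝ)}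

/-- `M_k = {z : Re z = −4k}`. -/
def M (k : ℕ) : Set ℂ := {z : ℂ | z.re = -(4 * (k : ℝ))}

/-- `T = G₀ ∪ ⋃_{k≥1} (L_k ∪ M_k)`. -/
def T : Set ℂ := G0 ∪ ⋃ k ∈ {k : ℕ | 1 ≤ k}, (L k ∪ M k)

/-- `n(p,q) = q(q−1)/2 + 1 + pq + p(p+1)/2`. -/
def nn (p q : ℕ) : ℕ := q * (q - 1) / 2 + 1 + p * q + p * (p + 1) / 2

/-- `G_{p,q} = G_{n(p,q)}`. -/
def Gpq (p q : ℕ) : Set ℂ := G (nn p q)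

/-- `B_{p,q} = B_{n(p,q)}`. -/
def Bpq (p q : ℕ) : Set ℂ := B (nn p q)

lemma mem_B_of_abs {w : ℂ} {n : ℕ}
    (h : ‖w + (4 * (n : ℂ) + 2)‖ < 1/2) : w ∈ B n :=
  Or.inl (Or.inl (le_of_lt (h.trans_le (by norm_num))))

theorem stmt8 (f g : ℂ → ℂ) (hf : Differentiable ℂ f) (hg : Differentiable ℂ g)
    (h1 : ∀ q : ℕ, 1 ≤ q → ∀ z ∈ Gpq 0 q,
      ‖f z + (4 * (nn 0 q : ℂ) + 2)‖ < 1/2)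
    (h2 : ∀ q : ℕ, 1 ≤ q → ∀ z ∈ Bpq 0 q,
      ‖g z + (4 * (nn 2 q : ℂ) + 2)‖ < 1/2)
    (h3 : ∀ p q : ℕ, 1 ≤ p → 1 ≤ q → ∀ z ∈ Bpq p q,
      ‖f z + (4 * (nn p (q+1) : ℂ) + 2)‖ < 1/2)
    (h4 : ∀ p q : ℕ, 2 ≤ p → 1 ≤ q → ∀ z ∈ Bpq p q,
      ‖g z + (4 * (nn p (q+1) : ℂ) + 2)‖ < 1/2) :
    ∀ q : ℕ, 1 ≤ q → ∀ m : ℕ, 1 ≤ m →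
      (g ∘ f)^[m] '' Gpq 0 q ⊆ Bpq 2 (q + 2 * (m - 1)) := by
  intro q hq m hm
  induction m, hm using Nat.le_induction with
  | base =>
    rintro w ⟨z, hz, rfl⟩
    simp only [Function.iterate_one, Function.comp_apply]
    have hfz : f z ∈ Bpq 0 q := mem_B_of_abs (h1 q hq z hz)
    have := mem_B_of_abs (h2 q hq (f z) hfz)
    simpa [Bpq, Nat.sub_self] using this
  | succ m hm ih =>
    rintro w ⟨z, hz, rfl⟩
    rw [Function.iterate_succ_apply']
    set r := q + 2 * (m - 1) with hr
    have hr1 : 1 ≤ r := le_trans hq (Nat.le_add_right _ _)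
    have hmem : (g ∘ f)^[m] z ∈ Bpq 2 r := ih ⟨z, hz, rfl⟩
    have hf2 : f ((g ∘ f)^[m] z) ∈ Bpq 2 (r + 1) :=
      mem_B_of_abs (h3 2 r (by norm_num) hr1 _ hmem)
    have hg2 : g (f ((g ∘ f)^[m] z)) ∈ Bpq 2 (r + 2) :=
      mem_B_of_abs (h4 2 (r + 1) (by norm_num) (by omega) _ hf2)
    have heq : q + 2 * (m + 1 - 1) = r + 2 := by omega
    rw [heq]
    simpa using hg2
end

section
/- Let f and g be entire functions such that for all integers q ≥ 1: |f(z) + (4·n(0,q)+2)| < 1/2 for z ∈ G_{0,q}; |g(z) + (4·n(2,q)+2)| < 1/2 for z ∈ B_{0,q}; |f(z) + (4·n(1,q)+2)| < 1/2 for z ∈ B_{2,q}; |g(z) − (4·n(0,q)+2)| < 1/2 for z ∈ B_{1,q}; |g(z) + (4·n(1,q)+2)| < 1/2 for z ∈ G_{0,q}; |f(z) + (4·n(3,q)+2)| < 1/2 for z ∈ B_{1,q}; and for all p ≥ 3, q ≥ 1: |f(z) + (4·n(p,q+1)+2)| < 1/2 for z ∈ B_{p,q}; and for all p ≥ 2,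 q ≥ 1: |g(z) + (4·n(p,q+1)+2)| < 1/2 for z ∈ B_{p,q}. Then for every q ≥ 1: (g∘f)∘(g∘f) maps G_{0,q} into the open disk {z : |z − (4·n(0,q)+2)| < 1/2} ⊂ G_{0,q}, while for every m ≥ 1, (f∘g)ᵐ(G_{0,q}) ⊂ B_{3, q+2(m−1)}. -/
open Complex Filter Set

lemma mem_B_of {k : ℕ} {w : ℂ} (h : ‖w + (4 * (k : ℂ) + 2)‖ < 1/2) : w ∈ B k := by
  left; left; exact le_trans h.le (by norm_num)

theorem stmt10 (f g : ℂ → ℂ) (hf : Differentiable ℂ f) (hg : Differentiable ℂ g)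
    (h1 : ∀ q : ℕ, 1 ≤ q → ∀ z ∈ Gpq 0 q,
      ‖f z + (4 * (nn 0 q : ℂ) + 2)‖ < 1/2)
    (h2 : ∀ q : ℕ, 1 ≤ q → ∀ z ∈ Bpq 0 q,
      ‖g z + (4 * (nn 2 q : ℂ) + 2)‖ < 1/2)
    (h3 : ∀ q : ℕ, 1 ≤ q → ∀ z ∈ Bpq 2 q,
      ‖f z + (4 * (nn 1 q : ℂ) + 2)‖ < 1/2)
    (h4 : ∀ q : ℕ, 1 ≤ q → ∀ z ∈ Bpq 1 q,
      ‖g z - (4 * (nn 0 q : ℂ) + 2)‖ < 1/2)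
    (h5 : ∀ q : ℕ, 1 ≤ q → ∀ z ∈ Gpq 0 q,
      ‖g z + (4 * (nn 1 q : ℂ) + 2)‖ < 1/2)
    (h6 : ∀ q : ℕ, 1 ≤ q → ∀ z ∈ Bpq 1 q,
      ‖f z + (4 * (nn 3 q : ℂ) + 2)‖ < 1/2)
    (h7 : ∀ p q : ℕ, 3 ≤ p → 1 ≤ q → ∀ z ∈ Bpq p q,
      ‖f z + (4 * (nn p (q+1) : ℂ) + 2)‖ < 1/2)
    (h8 : ∀ p q : ℕ, 2 ≤ p → 1 ≤ q → ∀ z ∈ Bpq p q,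
      ‖g z + (4 * (nn p (q+1) : ℂ) + 2)‖ < 1/2) :
    ∀ q : ℕ, 1 ≤ q →
      Set.MapsTo ((g ∘ f) ∘ (g ∘ f)) (Gpq 0 q)
        {z : ℂ | ‖z - (4 * (nn 0 q : ℂ) + 2)‖ < 1/2} ∧
      {z : ℂ | ‖z - (4 * (nn 0 q : ℂ) + 2)‖ < 1/2} ⊆ Gpq 0 q ∧
      ∀ m : ℕ, 1 ≤ m → (f ∘ g)^[m] '' Gpq 0 q ⊆ Bpq 3 (q + 2 * (m - 1)) := by
  intro q hq
  have key : ∀ z ∈ Gpq 0 q, ∀ m : ℕ, 1 ≤ m → (f ∘ g)^[m] z ∈ Bpq 3 (q + 2 * (m - 1)) := by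
    intro z hz m hm
    induction m with
    | zero => omega
    | succ m ih =>
      rcases Nat.eq_or_lt_of_le hm with h | h
      · -- m + 1 = 1
        have hm0 : m = 0 := by omega
        subst hm0
        have hg1 : g z ∈ Bpq 1 q := mem_B_of (h5 q hq z hz)
        have h := mem_B_of (h6 q hq _ hg1)
        have heq : q + 2 * (0 + 1 - 1) = q := by omega
        rwa [heq]
      · have hm1 : 1 ≤ m := by omega
        have ihm := ih hm1
        rw [Function.iterate_succ_apply', Function.comp_apply]
        set w := (f ∘ g)^[m] z with hw
        have hq1 : 1 ≤ q + 2 * (m - 1) := by omega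
        have hgw : g w ∈ Bpq 3 (q + 2 * (m - 1) + 1) :=
          mem_B_of (h8 3 (q + 2 * (m - 1)) (by norm_num) hq1 w ihm)
        have hfw : f (g w) ∈ Bpq 3 (q + 2 * (m - 1) + 1 + 1) :=
          mem_B_of (h7 3 (q + 2 * (m - 1) + 1) (by norm_num) (by omega) _ hgw)
        have heq : q + 2 * (m - 1) + 1 + 1 = q + 2 * (m + 1 - 1) := by omega
        rwa [heq] at hfw
  refine ⟨?_, ?_, ?_⟩
  · intro z hz
    have hf1 : f z ∈ Bpq 0 q := mem_B_of (h1 q hq z hz)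
    have hg1 : g (f z) ∈ Bpq 2 q := mem_B_of (h2 q hq _ hf1)
    have hf2 : f (g (f z)) ∈ Bpq 1 q := mem_B_of (h3 q hq _ hg1)
    exact h4 q hq _ hf2
  · intro z hz
    left; left
    have hz' : ‖z - (4 * (nn 0 q : ℂ) + 2)‖ < 1 / 2 := hz
    exact le_trans hz'.le (by norm_num)
  · intro m hm w hw
    obtain ⟨z, hz, rfl⟩ := hw
    exact key z hz m hm
end
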